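/- Let 𝔬_ℓ be a finite quotient of a complete discrete valuation ring and let A = diag(A₁, A₂), B = diag(B₁, B₂) ∈ gl_d(𝔬_ℓ) be block-diagonal matrices such that the residue-field characteristic polynomials of A₁ and A₂ are coprime (and similarly those of B₁ and B₂, with A_i and B_i having the same residue-field characteristic polynomials). Then A and B are conjugate under GL_d(𝔬_ℓ) if and only if A₁ is conjugate to B₁ under GL_{d₁}(𝔬_ℓ) and A₂ is conjugate to B₂ under GL_{d₂}(𝔬_ℓ). -/

import Mathlib

open Matrix Polynomial

/-- An intertwiner intertwines polynomial evaluations. -/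
lemma intertwine_aeval {S : Type*} [CommRing S] {d₁ d₂ : ℕ}
    (A : Matrix (Fin d₂) (Fin d₂) S) (B : Matrix (Fin d₁) (Fin d₁) S)
    (X : Matrix (Fin d₁) (Fin d₂) S) (h : X * A = B * X) (p : S[X]) :
    X * (Polynomial.aeval A p) = (Polynomial.aeval B p) * X := by
  have hpow : ∀ k : ℕ, X * A ^ k = B ^ k * X := by
    intro k
    induction k with
    | zero => simp
    | succ k ih =>
        rw [pow_succ, ← Matrix.mul_assoc, ih, Matrix.mul_assoc, h, ← Matrix.mul_assoc,
          ← pow_succ]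
  induction p using Polynomial.induction_on' with
  | add p q hp hq => simp [Matrix.mul_add, Matrix.add_mul, hp, hq]
  | monomial n a =>
      rw [Polynomial.aeval_monomial, Polynomial.aeval_monomial,
        Algebra.algebraMap_eq_smul_one, Algebra.algebraMap_eq_smul_one]
      rw [smul_mul_assoc, smul_mul_assoc, one_mul, one_mul, Matrix.mul_smul, hpow n,
        Matrix.smul_mul]

lemma map_aeval_matrix {S T : Type*} [CommRing S] [CommRing T] (f : S →+* T) {n : ℕ}
    (M : Matrix (Fin n) (Fin n) S) (p : S[X]) :
    (Polynomial.aeval M p).map f = Polynomial.aeval (M.map f) (p.map f) := by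
  rw [Polynomial.aeval_def, Polynomial.aeval_def, Polynomial.eval₂_map]
  have : (Matrix.map · f) = (f.mapMatrix : Matrix (Fin n) (Fin n) S →+* _) := rfl
  show f.mapMatrix (eval₂ _ _ _) = _
  rw [Polynomial.hom_eval₂]
  congr 1
  ext a i j
  simp only [RingHom.comp_apply, RingHom.mapMatrix_apply, Matrix.map_apply,
    Matrix.algebraMap_matrix_apply]
  split_ifs with h <;> simp

theorem block_diagonal_conjugacy
    (O : Type*) [CommRing O] [IsDomain O] [IsDiscreteValuationRing O]
    [Finite (IsLocalRing.ResidueField O)]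
    (ℓ : ℕ) (hℓ : 1 ≤ ℓ)
    (R : Type*) [CommRing R] (q : O →+* R) (hq : Function.Surjective q)
    (hker : RingHom.ker q = IsLocalRing.maximalIdeal O ^ ℓ)
    (r : R →+* O ⧸ IsLocalRing.maximalIdeal O)
    (hr : r.comp q = Ideal.Quotient.mk (IsLocalRing.maximalIdeal O))
    (d₁ d₂ : ℕ)
    (A₁ B₁ : Matrix (Fin d₁) (Fin d₁) R) (A₂ B₂ : Matrix (Fin d₂) (Fin d₂) R)
    (hcopA : IsCoprime ((A₁.map r).charpoly) ((A₂.map r).charpoly))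
    (hcopB : IsCoprime ((B₁.map r).charpoly) ((B₂.map r).charpoly))
    (hsame₁ : (A₁.map r).charpoly = (B₁.map r).charpoly)
    (hsame₂ : (A₂.map r).charpoly = (B₂.map r).charpoly) :
    (∃ g : (Matrix (Fin d₁ ⊕ Fin d₂) (Fin d₁ ⊕ Fin d₂) R)ˣ,
        (g : Matrix (Fin d₁ ⊕ Fin d₂) (Fin d₁ ⊕ Fin d₂) R) *
            Matrix.fromBlocks A₁ 0 0 A₂ =
          Matrix.fromBlocks B₁ 0 0 B₂ *
            (g : Matrix (Fin d₁ ⊕ Fin d₂) (Fin d₁ ⊕ Fin d₂) R)) ↔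
      (∃ g₁ : (Matrix (Fin d₁) (Fin d₁) R)ˣ,
          (g₁ : Matrix (Fin d₁) (Fin d₁) R) * A₁ = B₁ * g₁) ∧
      (∃ g₂ : (Matrix (Fin d₂) (Fin d₂) R)ˣ,
          (g₂ : Matrix (Fin d₂) (Fin d₂) R) * A₂ = B₂ * g₂) := by
  -- units of R detected by r
  have hunit : ∀ x : R, IsUnit (r x) → IsUnit x := by
    intro x hx
    obtain ⟨y, rfl⟩ := hq x
    have hy : IsUnit (Ideal.Quotient.mk (IsLocalRing.maximalIdeal O) y) := by
      rwa [← RingHom.congr_fun hr y]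
    have hym : y ∉ IsLocalRing.maximalIdeal O := by
      intro hmem
      rw [Ideal.Quotient.eq_zero_iff_mem.mpr hmem] at hy
      haveI : Nontrivial (O ⧸ IsLocalRing.maximalIdeal O) :=
        Ideal.Quotient.nontrivial_iff.mpr (IsLocalRing.maximalIdeal.isMaximal O).ne_top
      exact not_isUnit_zero hy
    exact (IsLocalRing.notMem_maximalIdeal.mp hym).map q
  -- a matrix over R is a unit if its reduction is
  have hMunit : ∀ {n : ℕ} (M : Matrix (Fin n) (Fin n) R),
      IsUnit (M.map r) → IsUnit M := by
    intro n M hM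
    rw [Matrix.isUnit_iff_isUnit_det] at hM ⊢
    exact hunit _ (by rwa [RingHom.map_det])
  -- key vanishing lemma, stated for both configurations
  have key₁ : ∀ X : Matrix (Fin d₁) (Fin d₂) R, X * A₂ = B₁ * X → X = 0 := by
    intro X h
    have h1 := intertwine_aeval A₂ B₁ X h A₂.charpoly
    rw [Matrix.aeval_self_charpoly, Matrix.mul_zero] at h1
    have hcop : IsCoprime ((B₁.map r).charpoly) ((A₂.map r).charpoly) := by
      rw [hsame₂]; exact hcopB
    obtain ⟨u, v, huv⟩ := hcop
    have h2 := congrArg (Polynomial.aeval (B₁.map r)) huv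
    rw [_root_.map_add, _root_.map_mul, _root_.map_mul, _root_.map_one,
      Matrix.aeval_self_charpoly, mul_zero, zero_add] at h2
    have hc : Polynomial.aeval (B₁.map r) ((A₂.map r).charpoly) *
        Polynomial.aeval (B₁.map r) v = 1 := (by
        calc Polynomial.aeval (B₁.map r) ((A₂.map r).charpoly) * Polynomial.aeval (B₁.map r) v
            = Polynomial.aeval (B₁.map r) ((A₂.map r).charpoly * v) :=
              (_root_.map_mul _ _ _).symm
          _ = Polynomial.aeval (B₁.map r) (v * (A₂.map r).charpoly) := by rw [mul_comm]
          _ = 1 := by rw [_root_.map_mul]; exact h2)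
    have hunit' : IsUnit (Polynomial.aeval (B₁.map r) ((A₂.map r).charpoly)) :=
      ⟨⟨_, Polynomial.aeval (B₁.map r) v, hc, by
        rw [← _root_.map_mul (Polynomial.aeval (B₁.map r)) v, mul_comm v,
          _root_.map_mul]; exact hc⟩, rfl⟩
    have hunitR : IsUnit (Polynomial.aeval B₁ A₂.charpoly) := by
      apply hMunit
      rwa [map_aeval_matrix, ← Matrix.charpoly_map]
    obtain ⟨w, hw⟩ := hunitR
    calc X = ((↑w⁻¹ : Matrix (Fin d₁) (Fin d₁) R) * ↑w) * X := by rw [Units.inv_mul, Matrix.one_mul]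
    _ = (↑w⁻¹ : Matrix (Fin d₁) (Fin d₁) R) * (Polynomial.aeval B₁ A₂.charpoly * X) := by rw [hw, Matrix.mul_assoc]
    _ = 0 := by rw [← h1, Matrix.mul_zero]
  have key₂ : ∀ X : Matrix (Fin d₂) (Fin d₁) R, X * A₁ = B₂ * X → X = 0 := by
    intro X h
    have h1 := intertwine_aeval A₁ B₂ X h A₁.charpoly
    rw [Matrix.aeval_self_charpoly, Matrix.mul_zero] at h1
    have hcop : IsCoprime ((B₂.map r).charpoly) ((A₁.map r).charpoly) := by
      rw [hsame₁]; exact hcopB.symm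
    obtain ⟨u, v, huv⟩ := hcop
    have h2 := congrArg (Polynomial.aeval (B₂.map r)) huv
    rw [_root_.map_add, _root_.map_mul, _root_.map_mul, _root_.map_one,
      Matrix.aeval_self_charpoly, mul_zero, zero_add] at h2
    have hc : Polynomial.aeval (B₂.map r) ((A₁.map r).charpoly) *
        Polynomial.aeval (B₂.map r) v = 1 := (by
        calc Polynomial.aeval (B₂.map r) ((A₁.map r).charpoly) * Polynomial.aeval (B₂.map r) v
            = Polynomial.aeval (B₂.map r) ((A₁.map r).charpoly * v) :=
              (_root_.map_mul _ _ _).symm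
          _ = Polynomial.aeval (B₂.map r) (v * (A₁.map r).charpoly) := by rw [mul_comm]
          _ = 1 := by rw [_root_.map_mul]; exact h2)
    have hunit' : IsUnit (Polynomial.aeval (B₂.map r) ((A₁.map r).charpoly)) :=
      ⟨⟨_, Polynomial.aeval (B₂.map r) v, hc, by
        rw [← _root_.map_mul (Polynomial.aeval (B₂.map r)) v, mul_comm v,
          _root_.map_mul]; exact hc⟩, rfl⟩
    have hunitR : IsUnit (Polynomial.aeval B₂ A₁.charpoly) := by
      apply hMunit
      rwa [map_aeval_matrix, ← Matrix.charpoly_map]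
    obtain ⟨w, hw⟩ := hunitR
    calc X = ((↑w⁻¹ : Matrix (Fin d₂) (Fin d₂) R) * ↑w) * X := by rw [Units.inv_mul, Matrix.one_mul]
    _ = (↑w⁻¹ : Matrix (Fin d₂) (Fin d₂) R) * (Polynomial.aeval B₂ A₁.charpoly * X) := by rw [hw, Matrix.mul_assoc]
    _ = 0 := by rw [← h1, Matrix.mul_zero]
  constructor
  · rintro ⟨g, hg⟩
    set V := (g : Matrix (Fin d₁ ⊕ Fin d₂) (Fin d₁ ⊕ Fin d₂) R) with hV
    rw [← Matrix.fromBlocks_toBlocks V, Matrix.fromBlocks_multiply,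
      Matrix.fromBlocks_multiply] at hg
    have h11 := congrArg Matrix.toBlocks₁₁ hg
    have h12 := congrArg Matrix.toBlocks₁₂ hg
    have h21 := congrArg Matrix.toBlocks₂₁ hg
    have h22 := congrArg Matrix.toBlocks₂₂ hg
    simp only [Matrix.toBlocks_fromBlocks₁₁, Matrix.toBlocks_fromBlocks₁₂,
      Matrix.toBlocks_fromBlocks₂₁, Matrix.toBlocks_fromBlocks₂₂,
      Matrix.mul_zero, Matrix.zero_mul, add_zero, zero_add] at h11 h12 h21 h22
    have h12' : V.toBlocks₁₂ = 0 := key₁ _ h12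
    have h21' : V.toBlocks₂₁ = 0 := key₂ _ h21
    have hVblocks : V = Matrix.fromBlocks V.toBlocks₁₁ 0 0 V.toBlocks₂₂ := by
      rw [← h12', ← h21', Matrix.fromBlocks_toBlocks]
    have hdet : IsUnit V.det := (Matrix.isUnit_iff_isUnit_det V).mp g.isUnit
    rw [hVblocks, Matrix.det_fromBlocks_zero₂₁] at hdet
    have hd1 : IsUnit V.toBlocks₁₁ :=
      (Matrix.isUnit_iff_isUnit_det _).mpr (isUnit_of_mul_isUnit_left hdet)
    have hd2 : IsUnit V.toBlocks₂₂ :=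
      (Matrix.isUnit_iff_isUnit_det _).mpr (isUnit_of_mul_isUnit_right hdet)
    refine ⟨⟨hd1.unit, ?_⟩, ⟨hd2.unit, ?_⟩⟩
    · rw [hd1.unit_spec]; exact h11
    · rw [hd2.unit_spec]; exact h22
  · rintro ⟨⟨g₁, hg₁⟩, ⟨g₂, hg₂⟩⟩
    refine ⟨⟨Matrix.fromBlocks g₁ 0 0 g₂, Matrix.fromBlocks ↑g₁⁻¹ 0 0 ↑g₂⁻¹, ?_, ?_⟩, ?_⟩
    · simp [Matrix.fromBlocks_multiply, ← Matrix.fromBlocks_one]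
    · simp [Matrix.fromBlocks_multiply, ← Matrix.fromBlocks_one]
    · simp only [Matrix.fromBlocks_multiply, Matrix.mul_zero, Matrix.zero_mul,
        add_zero, zero_add, hg₁, hg₂]
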